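/- Let H_n denote the monic Hermite polynomials orthogonal with respect to e^{-x²} on ℝ, and a ≠ 0. For n ≥ 0 define Q_n(x) = [[(4/a)H_n(x), -2H_n(x) - 4x n H_{n-1}(x) + n(n-1)H_{n-2}(x)],[-n(n-1)H_{n-2}(x), (4/a)H_n(x) + a x² n(n-1) H_{n-2}(x)]] (with H_{-1}=H_{-2}=0). Then ∫_ℝ Q_n(x) W(x) Q_m(x)* dx = 0 for n ≠ m, where W(x) = e^{-x²}[[1+a²x⁴, ax²],[ax²,1]]. -/

import Mathlib

open Matrix Polynomial MeasureTheory Real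

namespace Stmt10Aux

open Filter

noncomputable def J (p : Polynomial ℝ) : ℝ := ∫ x : ℝ, p.eval x * Real.exp (-x ^ 2)

lemma integ (p : Polynomial ℝ) :
    Integrable (fun x : ℝ => p.eval x * Real.exp (-x ^ 2)) := by
  induction p using Polynomial.induction_on' with
  | add p q hp hq => simpa [add_mul] using hp.fun_add hq
  | monomial k c =>
    have hk : (-1 : ℝ) < (k : ℝ) := lt_of_lt_of_le (by norm_num) (Nat.cast_nonneg k)
    have h := (integrable_rpow_mul_exp_neg_mul_sq (b := 1) one_pos hk).const_mul c
    refine h.congr (Filter.Eventually.of_forall fun x => ?_)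
    simp only [Real.rpow_natCast, eval_monomial]
    ring

lemma tendTop (p : Polynomial ℝ) :
    Tendsto (fun x : ℝ => p.eval x * Real.exp (-x ^ 2)) atTop (nhds 0) := by
  induction p using Polynomial.induction_on' with
  | add p q hp hq =>
    simpa [add_mul] using hp.add hq
  | monomial k c =>
    have h := (rpow_mul_exp_neg_mul_sq_isLittleO_exp_neg (b := 1) one_pos (k : ℝ)).isBigO
    have h0 : Tendsto (fun x : ℝ => Real.exp (-(1/2) * x)) atTop (nhds 0) := by
      have := Real.tendsto_exp_neg_atTop_nhds_zero.comp
        (Filter.tendsto_id.const_mul_atTop (by norm_num : (0:ℝ) < 1/2))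
      refine this.congr fun x => ?_
      simp [Function.comp, neg_mul]
    have h1 : Tendsto (fun x : ℝ => x ^ (k : ℝ) * Real.exp (-1 * x ^ 2)) atTop (nhds 0) :=
      h.trans_tendsto h0
    have h2 := h1.const_mul c
    rw [mul_zero] at h2
    refine h2.congr fun x => ?_
    simp only [Real.rpow_natCast, eval_monomial]
    ring

lemma tendBot (p : Polynomial ℝ) :
    Tendsto (fun x : ℝ => p.eval x * Real.exp (-x ^ 2)) atBot (nhds 0) := by
  have h := (tendTop (p.comp (-X))).comp tendsto_neg_atBot_atTop
  refine h.congr fun x => ?_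
  simp [Function.comp, eval_comp]

lemma ibp (p : Polynomial ℝ) : J (derivative p) = J (C 2 * X * p) := by
  have hderiv : ∀ x : ℝ, HasDerivAt (fun x : ℝ => p.eval x * Real.exp (-x ^ 2))
      (((derivative p - C 2 * X * p).eval x) * Real.exp (-x ^ 2)) x := by
    intro x
    have h1 : HasDerivAt (fun x : ℝ => -x ^ 2) (-(2 * x)) x := by
      simpa using ((hasDerivAt_pow 2 x).fun_neg)
    have h2 : HasDerivAt (fun x : ℝ => Real.exp (-x ^ 2))
        (Real.exp (-x ^ 2) * -(2 * x)) x := (Real.hasDerivAt_exp _).comp x h1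
    have h3 := (p.hasDerivAt x).fun_mul h2
    refine h3.congr_deriv ?_
    simp
    ring
  have hint : Integrable (fun x : ℝ =>
      ((derivative p - C 2 * X * p).eval x) * Real.exp (-x ^ 2)) := integ _
  have htop : Tendsto (fun x : ℝ => p.eval x * Real.exp (-x ^ 2)) atTop (nhds 0) := tendTop p
  have hbot : Tendsto (fun x : ℝ => p.eval x * Real.exp (-x ^ 2)) atBot (nhds 0) := tendBot p
  have hIoi : ∫ x in Set.Ioi (0:ℝ), ((derivative p - C 2 * X * p).eval x) * Real.exp (-x ^ 2)
      = 0 - (p.eval 0 * Real.exp (-(0:ℝ) ^ 2)) :=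
    integral_Ioi_of_hasDerivAt_of_tendsto' (fun x _ => hderiv x) hint.integrableOn htop
  have hIic : ∫ x in Set.Iic (0:ℝ), ((derivative p - C 2 * X * p).eval x) * Real.exp (-x ^ 2)
      = (p.eval 0 * Real.exp (-(0:ℝ) ^ 2)) - 0 :=
    integral_Iic_of_hasDerivAt_of_tendsto' (fun x _ => hderiv x) hint.integrableOn hbot
  have hsplit := intervalIntegral.integral_Iic_add_Ioi (b := (0:ℝ)) hint.integrableOn hint.integrableOn
  have h0 : ∫ x : ℝ, ((derivative p - C 2 * X * p).eval x) * Real.exp (-x ^ 2) = 0 := by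
    rw [← hsplit, hIoi, hIic]; ring
  simp only [eval_sub, sub_mul] at h0
  rw [integral_sub (integ (derivative p)) (integ (C 2 * X * p))] at h0
  unfold J
  linarith


lemma split2 (c1 c2 : ℝ) (P1 P2 : Polynomial ℝ) (f : ℝ → ℝ)
    (hf : ∀ x, f x = c1 * (P1.eval x * Real.exp (-x ^ 2))
      + c2 * (P2.eval x * Real.exp (-x ^ 2))) :
    (∫ x : ℝ, f x) = c1 * J P1 + c2 * J P2 := by
  unfold J
  rw [integral_congr_ae (Filter.Eventually.of_forall hf),
    integral_add ((integ P1).const_mul c1) ((integ P2).const_mul c2),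
    integral_const_mul, integral_const_mul]

lemma J_add (p q : Polynomial ℝ) : J (p + q) = J p + J q := by
  unfold J
  simp only [eval_add, add_mul]
  exact integral_add (integ p) (integ q)

lemma J_sub (p q : Polynomial ℝ) : J (p - q) = J p - J q := by
  unfold J
  simp only [eval_sub, sub_mul]
  exact integral_sub (integ p) (integ q)

lemma J_Cmul (c : ℝ) (p : Polynomial ℝ) : J (C c * p) = c * J p := by
  unfold J
  simp only [eval_mul, eval_C, mul_assoc]
  exact integral_const_mul c _

lemma J_zero : J 0 = 0 := by simp [J]

section Basics

variable (H : ℕ → Polynomial ℝ)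
variable (hMonic : ∀ n, (H n).Monic ∧ (H n).natDegree = n)
variable (hOrth : ∀ n m, n ≠ m →
      ∫ x : ℝ, (H n).eval x * (H m).eval x * Real.exp (-x ^ 2) = 0)

include hMonic hOrth

omit hMonic in
include hOrth in
lemma JOrth {n m : ℕ} (h : n ≠ m) : J (H n * H m) = 0 := by
  have := hOrth n m h
  unfold J
  simpa [eval_mul] using this

omit hOrth in
include hMonic in
lemma coeff_self (n : ℕ) : (H n).coeff n = 1 := by
  have h1 := (hMonic n).1
  have h2 := (hMonic n).2
  simpa [Polynomial.Monic, Polynomial.leadingCoeff, h2] using h1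

lemma orth_lt_aux : ∀ (d : ℕ) (p : Polynomial ℝ) (n : ℕ),
    p.natDegree = d → p.natDegree < n → J (p * H n) = 0 := by
  intro d
  induction d using Nat.strong_induction_on with
  | _ d IH =>
    intro p n hd hlt
    by_cases hp : p = 0
    · rw [hp, zero_mul]; exact J_zero
    set q : Polynomial ℝ := p - C (p.coeff d) * H d with hq
    have hqd : q.coeff d = 0 := by
      rw [hq, Polynomial.coeff_sub, Polynomial.coeff_C_mul, coeff_self H hMonic d, mul_one, sub_self]
    have hqdeg : q.natDegree ≤ d := by
      refine le_trans (Polynomial.natDegree_sub_le _ _) ?_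
      simp only [max_le_iff]
      exact ⟨le_of_eq hd, le_trans (Polynomial.natDegree_C_mul_le _ _) (le_of_eq (hMonic d).2)⟩
    have hqlt : q = 0 ∨ q.natDegree < d := by
      rcases eq_or_ne q 0 with h | h
      · exact Or.inl h
      rcases lt_or_eq_of_le hqdeg with h' | h'
      · exact Or.inr h'
      exfalso
      have hlc := Polynomial.leadingCoeff_ne_zero.mpr h
      rw [Polynomial.leadingCoeff, h'] at hlc
      exact hlc hqd
    have hsplit : p * H n = q * H n + C (p.coeff d) * (H d * H n) := by
      rw [hq]; ring
    have hJq : J (q * H n) = 0 := by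
      rcases hqlt with h | h
      · simp [h, J_zero]
      · exact IH q.natDegree h q n rfl (lt_trans (hd ▸ h) hlt)
    rw [hsplit, J_add, hJq, J_Cmul, JOrth H hOrth (show d ≠ n from Nat.ne_of_lt (hd ▸ hlt))]
    ring

lemma orth_lt (p : Polynomial ℝ) (n : ℕ) (h : p.natDegree < n) : J (p * H n) = 0 :=
  orth_lt_aux H hMonic hOrth p.natDegree p n rfl h

lemma lead_extract (p : Polynomial ℝ) (n : ℕ) (h : p.natDegree ≤ n) :
    J (p * H n) = p.coeff n * J (H n * H n) := by
  set q : Polynomial ℝ := p - C (p.coeff n) * H n with hq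
  have hqd : q.coeff n = 0 := by
    rw [hq, Polynomial.coeff_sub, Polynomial.coeff_C_mul, coeff_self H hMonic n, mul_one,
      sub_self]
  have hqdeg : q.natDegree ≤ n := by
    refine le_trans (Polynomial.natDegree_sub_le _ _) ?_
    simp only [max_le_iff]
    exact ⟨h, le_trans (Polynomial.natDegree_C_mul_le _ _) (le_of_eq (hMonic n).2)⟩
  have hqlt : q = 0 ∨ q.natDegree < n := by
    rcases eq_or_ne q 0 with h' | h'
    · exact Or.inl h'
    rcases lt_or_eq_of_le hqdeg with h'' | h''
    · exact Or.inr h''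
    exfalso
    have hlc := Polynomial.leadingCoeff_ne_zero.mpr h'
    rw [Polynomial.leadingCoeff, h''] at hlc
    exact hlc hqd
  have hsplit : p * H n = q * H n + C (p.coeff n) * (H n * H n) := by
    rw [hq]; ring
  have hJq : J (q * H n) = 0 := by
    rcases hqlt with h' | h'
    · simp [h', J_zero]
    · exact orth_lt H hMonic hOrth q n h'
  rw [hsplit, J_add, hJq, J_Cmul]
  ring

omit hOrth in
include hMonic in
lemma norm_pos (n : ℕ) : 0 < J (H n * H n) := by
  unfold J
  refine (integral_pos_iff_support_of_nonneg ?_ (integ _)).mpr ?_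
  · intro x
    simp only [Pi.zero_apply, eval_mul]
    exact mul_nonneg (mul_self_nonneg _) (le_of_lt (Real.exp_pos _))
  · have hne : H n ≠ 0 := (hMonic n).1.ne_zero
    have hroots : {x : ℝ | (H n).eval x = 0}.Finite := Polynomial.finite_setOf_isRoot hne
    have hsupp : Function.support (fun x : ℝ => (H n * H n).eval x * Real.exp (-x ^ 2))
        = {x : ℝ | (H n).eval x ≠ 0} := by
      ext x
      simp [Function.mem_support, eval_mul, Real.exp_ne_zero, mul_self_eq_zero, not_or]
    rw [hsupp]
    by_contra hz
    push_neg at hz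
    have hz0 : volume {x : ℝ | (H n).eval x ≠ 0} = 0 := le_antisymm hz (zero_le ..)
    have : volume (Set.univ : Set ℝ) ≤
        volume {x : ℝ | (H n).eval x ≠ 0} + volume {x : ℝ | (H n).eval x = 0} := by
      refine le_trans (measure_mono ?_) (measure_union_le _ _)
      intro x _
      by_cases h : (H n).eval x = 0
      · exact Or.inr h
      · exact Or.inl h
    rw [hz0, hroots.measure_zero, Real.volume_univ] at this
    simp at this


lemma orthD (n k : ℕ) (hk : n ≤ k) : J (derivative (H n) * H k) = 0 := by
  by_cases h0 : (H n).natDegree = 0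
  · obtain ⟨c, hc⟩ := Polynomial.natDegree_eq_zero.mp h0
    rw [← hc, derivative_C, zero_mul]
    exact J_zero
  · refine orth_lt H hMonic hOrth _ _ ?_
    calc (derivative (H n)).natDegree < (H n).natDegree := natDegree_derivative_lt h0
    _ = n := (hMonic n).2
    _ ≤ k := hk

lemma bzero (n : ℕ) : J (X * (H n * H n)) = 0 := by
  have h := ibp (H n * H n)
  have h1 : derivative (H n * H n) = derivative (H n) * H n + H n * derivative (H n) := by
    rw [derivative_mul]
  have h2 : J (derivative (H n * H n)) = 0 := by
    rw [h1, J_add, show H n * derivative (H n) = derivative (H n) * H n from mul_comm _ _,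
      orthD H hMonic hOrth n n le_rfl]
    ring
  rw [show C (2:ℝ) * X * (H n * H n) = C (2:ℝ) * (X * (H n * H n)) from by ring, J_Cmul] at h
  rw [h2] at h
  linarith

lemma norm_rel (n : ℕ) :
    2 * J (H (n + 1) * H (n + 1)) = ((n : ℝ) + 1) * J (H n * H n) := by
  have h := ibp (H (n + 1) * H n)
  have hd : derivative (H (n + 1) * H n)
      = derivative (H (n + 1)) * H n + H (n + 1) * derivative (H n) := derivative_mul
  have hJd2 : J (H (n + 1) * derivative (H n)) = 0 := by
    rw [mul_comm]
    exact orthD H hMonic hOrth n (n + 1) (Nat.le_succ n)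
  have hdeg : (derivative (H (n + 1))).natDegree ≤ n := by
    refine le_trans (natDegree_derivative_le _) ?_
    rw [(hMonic (n + 1)).2]
    omega
  have hco : (derivative (H (n + 1))).coeff n = (n : ℝ) + 1 := by
    rw [Polynomial.coeff_derivative, coeff_self H hMonic (n + 1)]
    push_cast
    ring
  have hJd1 : J (derivative (H (n + 1)) * H n) = ((n : ℝ) + 1) * J (H n * H n) := by
    rw [lead_extract H hMonic hOrth _ n hdeg, hco]
  have hXdeg : (X * H n).natDegree ≤ n + 1 := by
    refine le_trans (natDegree_mul_le) ?_
    rw [natDegree_X, (hMonic n).2]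
    omega
  have hXco : (X * H n).coeff (n + 1) = 1 := by
    rw [Polynomial.coeff_X_mul, coeff_self H hMonic n]
  have hJr : J (C (2:ℝ) * X * (H (n + 1) * H n)) = 2 * J (H (n + 1) * H (n + 1)) := by
    rw [show C (2:ℝ) * X * (H (n + 1) * H n) = C (2:ℝ) * ((X * H n) * H (n + 1)) from by ring,
      J_Cmul, lead_extract H hMonic hOrth _ (n + 1) hXdeg, hXco]
    ring
  rw [hd, J_add, hJd1, hJd2, hJr] at h
  linarith

lemma zero_of_orthAll (p : Polynomial ℝ) (h : ∀ k, J (p * H k) = 0) : p = 0 := by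
  by_contra hp
  have hle := lead_extract H hMonic hOrth p p.natDegree le_rfl
  rw [h p.natDegree] at hle
  have hlc : p.coeff p.natDegree ≠ 0 := by
    rw [← Polynomial.leadingCoeff]
    exact Polynomial.leadingCoeff_ne_zero.mpr hp
  have hpos := norm_pos H hMonic p.natDegree
  have := mul_ne_zero hlc (ne_of_gt hpos)
  exact this hle.symm

lemma hrec (n : ℕ) : X * H n = H (n + 1) + C ((n : ℝ) / 2) * H (n - 1) := by
  set r : Polynomial ℝ := X * H n - H (n + 1) - C ((n : ℝ) / 2) * H (n - 1) with hr
  have hr0 : r = 0 := by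
    apply zero_of_orthAll H hMonic hOrth
    intro k
    have hsplit : r * H k
        = (X * H k) * H n - H (n + 1) * H k - C ((n : ℝ) / 2) * (H (n - 1) * H k) := by
      rw [hr]; ring
    rw [hsplit, J_sub, J_sub, J_Cmul]
    have hXdeg : (X * H k).natDegree ≤ k + 1 := by
      refine le_trans (natDegree_mul_le) ?_
      rw [natDegree_X, (hMonic k).2]
      omega
    have hXn : (X * H n).natDegree ≤ n + 1 := by
      refine le_trans (natDegree_mul_le) ?_
      rw [natDegree_X, (hMonic n).2]
      omega
    by_cases hk1 : k + 1 < n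
    · rw [orth_lt H hMonic hOrth _ n (lt_of_le_of_lt hXdeg hk1),
        JOrth H hOrth (show n + 1 ≠ k by omega), JOrth H hOrth (show n - 1 ≠ k by omega)]
      ring
    by_cases hk2 : k + 1 = n
    · subst hk2
      have h1 : J ((X * H k) * H (k + 1)) = J (H (k + 1) * H (k + 1)) := by
        rw [lead_extract H hMonic hOrth _ (k + 1) hXdeg, Polynomial.coeff_X_mul,
          coeff_self H hMonic k, one_mul]
      have h2 : J (H (k + 1 + 1) * H k) = 0 := JOrth H hOrth (by omega)
      have h3 : k + 1 - 1 = k := by omega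
      have h4 := norm_rel H hMonic hOrth k
      rw [h1, h2, h3]
      push_cast
      linarith
    by_cases hk3 : k = n
    · subst hk3
      have h1 : J ((X * H k) * H k) = 0 := by
        rw [show (X * H k) * H k = X * (H k * H k) from by ring]
        exact bzero H hMonic hOrth k
      have h2 : J (H (k + 1) * H k) = 0 := JOrth H hOrth (by omega)
      have h3 : ((k : ℝ) / 2) * J (H (k - 1) * H k) = 0 := by
        rcases Nat.eq_zero_or_pos k with hk0 | hk0
        · subst hk0; norm_num
        · rw [JOrth H hOrth (show k - 1 ≠ k by omega)]; ring
      rw [h1, h2]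
      linarith [h3]
    by_cases hk4 : k = n + 1
    · subst hk4
      have h1 : J (X * H (n + 1) * H n) = J (H (n + 1) * H (n + 1)) := by
        rw [show X * H (n + 1) * H n = (X * H n) * H (n + 1) from by ring,
          lead_extract H hMonic hOrth _ (n + 1) hXn, Polynomial.coeff_X_mul,
          coeff_self H hMonic n, one_mul]
      rw [h1, JOrth H hOrth (show n - 1 ≠ n + 1 by omega)]
      ring
    · have hk5 : n + 1 < k := by omega
      rw [show X * H k * H n = (X * H n) * H k from by ring,
        orth_lt H hMonic hOrth _ k (lt_of_le_of_lt hXn hk5),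
        JOrth H hOrth (show n + 1 ≠ k by omega), JOrth H hOrth (show n - 1 ≠ k by omega)]
      ring
  have : X * H n - H (n + 1) - C ((n : ℝ) / 2) * H (n - 1) = 0 := hr ▸ hr0
  linear_combination this


lemma recEval (n : ℕ) (x : ℝ) :
    x * (H n).eval x = (H (n + 1)).eval x + ((n : ℝ) / 2) * (H (n - 1)).eval x := by
  have h := congrArg (eval x) (hrec H hMonic hOrth n)
  simpa using h

lemma K1 {a : ℝ} (ha : a ≠ 0) (n : ℕ) (x : ℝ) :
    a * x ^ 2 * (4 / a * (H n).eval x)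
      + ((-2) * (H n).eval x - 4 * (n : ℝ) * x * (H (n - 1)).eval x
        + (n : ℝ) * ((n : ℝ) - 1) * (H (n - 2)).eval x)
      = 4 * (H (n + 2)).eval x := by
  have h4a : a * (4 / a) = 4 := by field_simp
  rcases n with _ | k
  · have R0 : x * (H 0).eval x = (H 1).eval x := by
      have := recEval H hMonic hOrth 0 x
      simpa using this
    have R1 : x * (H 1).eval x = (H 2).eval x + (1 / 2 : ℝ) * (H 0).eval x := by
      have := recEval H hMonic hOrth 1 x
      norm_num at this
      simpa using this
    push_cast
    linear_combination (x ^ 2 * (H 0).eval x) * h4a + (4 * x) * R0 + 4 * R1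
  · have R0 : x * (H k).eval x = (H (k + 1)).eval x + ((k : ℝ) / 2) * (H (k - 1)).eval x :=
      recEval H hMonic hOrth k x
    have R1 : x * (H (k + 1)).eval x
        = (H (k + 2)).eval x + (((k : ℝ) + 1) / 2) * (H k).eval x := by
      have := recEval H hMonic hOrth (k + 1) x
      rw [show k + 1 - 1 = k by omega] at this
      push_cast at this
      linarith
    have R2 : x * (H (k + 2)).eval x
        = (H (k + 3)).eval x + (((k : ℝ) + 2) / 2) * (H (k + 1)).eval x := by
      have := recEval H hMonic hOrth (k + 2) x
      rw [show k + 2 - 1 = k + 1 by omega] at this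
      push_cast at this
      linarith
    rw [show k + 1 - 1 = k by omega, show k + 1 - 2 = k - 1 by omega]
    push_cast
    linear_combination (x ^ 2 * (H (k + 1)).eval x) * h4a + (4 * x) * R1 + 4 * R2
      + (-(2 * ((k : ℝ) + 1))) * R0

end Basics

end Stmt10Aux

open Stmt10Aux

/-- Orthogonality of the matrix polynomials `Q_n` obtained from the monic Hermite
polynomials via the degree-preserving operator `V`, with respect to the Hermite-type
weight `W(x) = e^{-x²}[[1+a²x⁴, ax²],[ax²,1]]`.  Here `H_{-1} = H_{-2} = 0` is encoded by
the vanishing numerical coefficients `n` and `n(n-1)` (truncated subtraction on `ℕ`). -/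
theorem stmt10 (a : ℝ) (ha : a ≠ 0)
    (H : ℕ → Polynomial ℝ)
    (hMonic : ∀ n, (H n).Monic ∧ (H n).natDegree = n)
    (hOrth : ∀ n m, n ≠ m →
      ∫ x : ℝ, (H n).eval x * (H m).eval x * Real.exp (-x ^ 2) = 0) :
    ∀ n m, n ≠ m → ∀ i j : Fin 2,
      (∫ x : ℝ,
        (((!![C (4/a) * H n,
              C (-2) * H n - C (4 * (n : ℝ)) * X * H (n - 1) +
                C ((n : ℝ) * ((n : ℝ) - 1)) * H (n - 2);
              -(C ((n : ℝ) * ((n : ℝ) - 1)) * H (n - 2)),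
              C (4/a) * H n + C (a * (n : ℝ) * ((n : ℝ) - 1)) * X ^ 2 * H (n - 2)] :
            Matrix (Fin 2) (Fin 2) (Polynomial ℝ)).map (Polynomial.eval x)) *
          ((Real.exp (-x ^ 2)) • !![1 + a^2 * x^4, a * x^2; a * x^2, 1]) *
          ((!![C (4/a) * H m,
              C (-2) * H m - C (4 * (m : ℝ)) * X * H (m - 1) +
                C ((m : ℝ) * ((m : ℝ) - 1)) * H (m - 2);
              -(C ((m : ℝ) * ((m : ℝ) - 1)) * H (m - 2)),
              C (4/a) * H m + C (a * (m : ℝ) * ((m : ℝ) - 1)) * X ^ 2 * H (m - 2)] :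
            Matrix (Fin 2) (Fin 2) (Polynomial ℝ)).map (Polynomial.eval x))ᵀ) i j) = 0 := by
  intro n m hnm i j
  have hK1 : ∀ (k : ℕ) (x : ℝ),
      a * x ^ 2 * (4 / a * (H k).eval x)
        + ((-2) * (H k).eval x - 4 * (k : ℝ) * x * (H (k - 1)).eval x
          + (k : ℝ) * ((k : ℝ) - 1) * (H (k - 2)).eval x)
        = 4 * (H (k + 2)).eval x := fun k x => K1 H hMonic hOrth ha k x
  have hJO : ∀ {p q : ℕ}, p ≠ q → J (H p * H q) = 0 := fun {p q} h => JOrth H hOrth h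
  have hNR := fun k => norm_rel H hMonic hOrth k
  fin_cases i <;> fin_cases j
  · -- (0,0)
    refine (split2 16 (16 / a ^ 2) (H (n + 2) * H (m + 2)) (H n * H m) _ (fun x => ?_)).trans ?_
    · simp only [Matrix.mul_apply, Fin.sum_univ_two, Matrix.map_apply, Matrix.smul_apply,
        Matrix.transpose_apply, Matrix.cons_val', Matrix.cons_val_zero, Matrix.cons_val_one,
        Matrix.head_cons, Matrix.head_fin_const, Matrix.empty_val', Matrix.cons_val_fin_one,
        Fin.mk_zero, Fin.mk_one, Fin.isValue, Matrix.of_apply,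
        smul_eq_mul, eval_mul, eval_add, eval_sub, eval_neg, eval_C, eval_X, eval_pow]
      linear_combination (Real.exp (-x ^ 2) * (a * x ^ 2 * (4 / a * (H m).eval x)
          + ((-2) * (H m).eval x - 4 * (m : ℝ) * x * (H (m - 1)).eval x
            + (m : ℝ) * ((m : ℝ) - 1) * (H (m - 2)).eval x))) * hK1 n x
        + (Real.exp (-x ^ 2) * 4 * (H (n + 2)).eval x) * hK1 m x
    · rw [hJO (show n + 2 ≠ m + 2 by omega), hJO hnm]
      ring
  · -- (0,1)
    refine (split2 (16 / a) (-(4 / a * ((m : ℝ) * ((m : ℝ) - 1)))) (H (n + 2) * H m)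
      (H n * H (m - 2)) _ (fun x => ?_)).trans ?_
    · simp only [Matrix.mul_apply, Fin.sum_univ_two, Matrix.map_apply, Matrix.smul_apply,
        Matrix.transpose_apply, Matrix.cons_val', Matrix.cons_val_zero, Matrix.cons_val_one,
        Matrix.head_cons, Matrix.head_fin_const, Matrix.empty_val', Matrix.cons_val_fin_one,
        Fin.mk_zero, Fin.mk_one, Fin.isValue, Matrix.of_apply,
        smul_eq_mul, eval_mul, eval_add, eval_sub, eval_neg, eval_C, eval_X, eval_pow]
      linear_combination (Real.exp (-x ^ 2) * (4 / a * (H m).eval x)) * hK1 n x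
    · by_cases hm2 : m = n + 2
      · subst hm2
        rw [show n + 2 - 2 = n by omega]
        have e1 := hNR n
        have e2 := hNR (n + 1)
        rw [show n + 1 + 1 = n + 2 from rfl] at e2
        push_cast at e1 e2 ⊢
        linear_combination (8 / a) * e2 + (4 * ((n : ℝ) + 2) / a) * e1
      · rw [hJO (show n + 2 ≠ m from fun h => hm2 h.symm)]
        rcases m with _ | _ | m
        · push_cast
          norm_num
        · push_cast
          norm_num
        · rw [show m + 2 - 2 = m by omega, hJO (show n ≠ m by omega)]
          ring
  · -- (1,0)
    refine (split2 (16 / a) (-(4 / a * ((n : ℝ) * ((n : ℝ) - 1)))) (H n * H (m + 2))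
      (H (n - 2) * H m) _ (fun x => ?_)).trans ?_
    · simp only [Matrix.mul_apply, Fin.sum_univ_two, Matrix.map_apply, Matrix.smul_apply,
        Matrix.transpose_apply, Matrix.cons_val', Matrix.cons_val_zero, Matrix.cons_val_one,
        Matrix.head_cons, Matrix.head_fin_const, Matrix.empty_val', Matrix.cons_val_fin_one,
        Fin.mk_zero, Fin.mk_one, Fin.isValue, Matrix.of_apply,
        smul_eq_mul, eval_mul, eval_add, eval_sub, eval_neg, eval_C, eval_X, eval_pow]
      linear_combination (Real.exp (-x ^ 2) * (4 / a * (H n).eval x)) * hK1 m x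
    · by_cases hn2 : n = m + 2
      · subst hn2
        rw [show m + 2 - 2 = m by omega]
        have e1 := hNR m
        have e2 := hNR (m + 1)
        rw [show m + 1 + 1 = m + 2 from rfl] at e2
        push_cast at e1 e2 ⊢
        linear_combination (8 / a) * e2 + (4 * ((m : ℝ) + 2) / a) * e1
      · rw [hJO (show n ≠ m + 2 from hn2)]
        rcases n with _ | _ | n
        · push_cast
          norm_num
        · push_cast
          norm_num
        · rw [show n + 2 - 2 = n by omega, hJO (show n ≠ m by omega)]
          ring
  · -- (1,1)
    refine (split2 (16 / a ^ 2) ((n : ℝ) * ((n : ℝ) - 1) * ((m : ℝ) * ((m : ℝ) - 1)))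
      (H n * H m) (H (n - 2) * H (m - 2)) _ (fun x => ?_)).trans ?_
    · simp only [Matrix.mul_apply, Fin.sum_univ_two, Matrix.map_apply, Matrix.smul_apply,
        Matrix.transpose_apply, Matrix.cons_val', Matrix.cons_val_zero, Matrix.cons_val_one,
        Matrix.head_cons, Matrix.head_fin_const, Matrix.empty_val', Matrix.cons_val_fin_one,
        Fin.mk_zero, Fin.mk_one, Fin.isValue, Matrix.of_apply,
        smul_eq_mul, eval_mul, eval_add, eval_sub, eval_neg, eval_C, eval_X, eval_pow]
      ring
    · rw [hJO hnm]
      rcases n with _ | _ | n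
      · push_cast
        norm_num
      · push_cast
        norm_num
      · rcases m with _ | _ | m
        · push_cast
          norm_num
        · push_cast
          norm_num
        · rw [show n + 2 - 2 = n by omega, show m + 2 - 2 = m by omega,
            hJO (show n ≠ m by omega)]
          ring
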